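/- Fix an integer d ≥ 1, t > 0, z ∈ ℝ^d, C > 0, and a unit vector v ∈ ℝ^d. Let g : ℝ^d → ℝ be twice continuously differentiable with |vᵀ D²g(y) v| ≤ C t^{−(d+2)/2} exp(−‖y−z‖²/(Ct)) for all y ∈ ℝ^d, and suppose that ∫_{ℝ^d} vᵀ D²g(y) v dy = 0. Then there exist constants C', c' > 0, depending only on C and d, such that for every center c ∈ ℝ^d and radius ε > 0, |∫_{B(c,ε)} vᵀ D²g(y) v dy| ≤ C' t^{−1} exp(−c' (‖z−c‖ − ε)² / t). -/

import Mathlib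

open MeasureTheory

lemma gauss_integrable {E : Type*} [NormedAddCommGroup E] [InnerProductSpace ℝ E]
    [FiniteDimensional ℝ E] [MeasurableSpace E] [BorelSpace E] {b : ℝ} (hb : 0 < b) :
    Integrable (fun x : E => Real.exp (-b * ‖x‖ ^ 2)) := by
  have h := (GaussianFourier.integrable_cexp_neg_mul_sq_norm_add (V := E) (b := (b : ℂ))
    (by simpa using hb) 0 (0 : E)).norm
  refine h.congr (Filter.Eventually.of_forall fun x => ?_)
  simp [Complex.norm_exp, ← Complex.ofReal_pow]

lemma gauss_aux {d : ℕ} {A b R : ℝ} (hA : 0 ≤ A) (hb : 0 < b) (hR : 0 ≤ R)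
    (z : EuclideanSpace ℝ (Fin d)) (f : EuclideanSpace ℝ (Fin d) → ℝ)
    (hf : Integrable f)
    (hfb : ∀ y, |f y| ≤ A * Real.exp (-(2 * b) * ‖y - z‖ ^ 2))
    (S : Set (EuclideanSpace ℝ (Fin d))) (hS : MeasurableSet S)
    (hSR : ∀ y ∈ S, R ≤ ‖y - z‖) :
    |∫ y in S, f y| ≤ A * Real.exp (-b * R ^ 2) * (Real.pi / b) ^ ((d : ℝ) / 2) := by
  have hG : Integrable (fun y : EuclideanSpace ℝ (Fin d) =>
      A * Real.exp (-b * R ^ 2) * Real.exp (-b * ‖y - z‖ ^ 2)) := by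
    have := ((gauss_integrable (E := EuclideanSpace ℝ (Fin d)) hb).comp_sub_right z)
    exact this.const_mul _
  have hpt : ∀ y ∈ S, |f y| ≤ A * Real.exp (-b * R ^ 2) * Real.exp (-b * ‖y - z‖ ^ 2) := by
    intro y hy
    refine (hfb y).trans ?_
    rw [mul_assoc]
    refine mul_le_mul_of_nonneg_left ?_ hA
    rw [← Real.exp_add]
    apply Real.exp_le_exp.2
    have h1 : R ^ 2 ≤ ‖y - z‖ ^ 2 := by
      apply sq_le_sq' _ (hSR y hy)
      linarith [hSR y hy, norm_nonneg (y - z)]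
    nlinarith [hb.le]
  calc |∫ y in S, f y| ≤ ∫ y in S, |f y| := by
        simpa [Real.norm_eq_abs] using
          norm_integral_le_integral_norm (μ := volume.restrict S) f
    _ ≤ ∫ y in S, A * Real.exp (-b * R ^ 2) * Real.exp (-b * ‖y - z‖ ^ 2) := by
        exact setIntegral_mono_on hf.norm.integrableOn hG.integrableOn hS hpt
    _ ≤ ∫ y : EuclideanSpace ℝ (Fin d),
          A * Real.exp (-b * R ^ 2) * Real.exp (-b * ‖y - z‖ ^ 2) := by
        refine setIntegral_le_integral hG (Filter.Eventually.of_forall fun y => ?_)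
        positivity
    _ = A * Real.exp (-b * R ^ 2) * (Real.pi / b) ^ ((d : ℝ) / 2) := by
        rw [integral_const_mul]
        congr 1
        have := integral_sub_right_eq_self (μ := (volume : Measure (EuclideanSpace ℝ (Fin d))))
          (fun x : EuclideanSpace ℝ (Fin d) => Real.exp (-b * ‖x‖ ^ 2)) z
        rw [this, GaussianFourier.integral_rexp_neg_mul_sq_norm hb, finrank_euclideanSpace_fin]

/-- If `g` is `C²` with `|vᵀ D²g(y) v| ≤ C t^{−(d+2)/2}
exp(−‖y−z‖²/(Ct))` for a unit vector `v`, and `∫_{ℝ^d} vᵀ D²g(y) v dy = 0`,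
then there are `C', c' > 0` depending only on `C` and `d` such that for every
ball `B(c,ε)`,
`|∫_{B(c,ε)} vᵀ D²g(y) v dy| ≤ C' t^{−1} exp(−c'(‖z−c‖−ε)²/t)`. -/
theorem stmt_15 (d : ℕ) (hd : 1 ≤ d) (C : ℝ) (hC : 0 < C) :
    ∃ C' c' : ℝ, 0 < C' ∧ 0 < c' ∧
      ∀ t : ℝ, 0 < t → ∀ z v : EuclideanSpace ℝ (Fin d), ‖v‖ = 1 →
        ∀ g : EuclideanSpace ℝ (Fin d) → ℝ, ContDiff ℝ 2 g →
          (∀ y, |iteratedFDeriv ℝ 2 g y ![v, v]| ≤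
              C * t ^ (-((d : ℝ) + 2) / 2) * Real.exp (-‖y - z‖ ^ 2 / (C * t))) →
          (∫ y : EuclideanSpace ℝ (Fin d), iteratedFDeriv ℝ 2 g y ![v, v]) = 0 →
          ∀ (c : EuclideanSpace ℝ (Fin d)) (ε : ℝ), 0 < ε →
            |∫ y in Metric.ball c ε, iteratedFDeriv ℝ 2 g y ![v, v]| ≤
              C' * t⁻¹ * Real.exp (-c' * (‖z - c‖ - ε) ^ 2 / t) := by
  refine ⟨C * (2 * Real.pi * C) ^ ((d : ℝ) / 2), (2 * C)⁻¹, by positivity, by positivity,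
    ?_⟩
  intro t ht z v hv g hg hbound hzero c ε hε
  set f : EuclideanSpace ℝ (Fin d) → ℝ := fun y => iteratedFDeriv ℝ 2 g y ![v, v] with hf
  set A : ℝ := C * t ^ (-((d : ℝ) + 2) / 2) with hA
  have hApos : 0 < A := by positivity
  set b : ℝ := (2 * C * t)⁻¹ with hb
  have hbpos : 0 < b := by positivity
  have hfb : ∀ y, |f y| ≤ A * Real.exp (-(2 * b) * ‖y - z‖ ^ 2) := by
    intro y
    have := hbound y
    have he : -‖y - z‖ ^ 2 / (C * t) = -(2 * b) * ‖y - z‖ ^ 2 := by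
      rw [hb]; field_simp
    rwa [he] at this
  have hfc : Continuous f :=
    (continuous_eval_const ![v, v]).comp (hg.continuous_iteratedFDeriv le_rfl)
  have hGint : Integrable (fun y : EuclideanSpace ℝ (Fin d) =>
      A * Real.exp (-(2 * b) * ‖y - z‖ ^ 2)) :=
    ((gauss_integrable (by positivity : (0:ℝ) < 2 * b)).comp_sub_right z).const_mul _
  have hint : Integrable f := by
    refine hGint.mono' hfc.aestronglyMeasurable
      (Filter.Eventually.of_forall fun y => ?_)
    simpa [Real.norm_eq_abs] using hfb y
  -- final arithmetic identity
  have hkey : A * Real.exp (-b * (‖z - c‖ - ε) ^ 2) * (Real.pi / b) ^ ((d : ℝ) / 2)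
      = C * (2 * Real.pi * C) ^ ((d : ℝ) / 2) * t⁻¹
        * Real.exp (-(2 * C)⁻¹ * (‖z - c‖ - ε) ^ 2 / t) := by
    have h1 : Real.pi / b = 2 * Real.pi * C * t := by
      rw [hb]; field_simp
    have h2 : (2 * Real.pi * C * t) ^ ((d : ℝ) / 2)
        = (2 * Real.pi * C) ^ ((d : ℝ) / 2) * t ^ ((d : ℝ) / 2) := by
      rw [Real.mul_rpow (by positivity) ht.le]
    have h3 : t ^ (-((d : ℝ) + 2) / 2) * t ^ ((d : ℝ) / 2) = t⁻¹ := by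
      rw [← Real.rpow_add ht]
      have he : -((d : ℝ) + 2) / 2 + (d : ℝ) / 2 = -1 := by ring
      rw [he, Real.rpow_neg_one]
    have h4 : -b * (‖z - c‖ - ε) ^ 2 = -(2 * C)⁻¹ * (‖z - c‖ - ε) ^ 2 / t := by
      rw [hb]; field_simp
    rw [h1, h2, h4, hA, ← h3]
    ring
  rw [show (2 * C)⁻¹ = (2 * C)⁻¹ from rfl]
  rcases le_or_gt ε ‖z - c‖ with hcase | hcase
  · -- z outside (or on) the ball : integrate over the ball directly
    have hR : 0 ≤ ‖z - c‖ - ε := by linarith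
    have hSR : ∀ y ∈ Metric.ball c ε, ‖z - c‖ - ε ≤ ‖y - z‖ := by
      intro y hy
      have h1 : ‖z - c‖ ≤ ‖z - y‖ + ‖y - c‖ := by
        simpa using norm_sub_le_norm_sub_add_norm_sub z y c
      have h2 : ‖y - c‖ < ε := by simpa [dist_eq_norm] using hy
      have h3 : ‖z - y‖ = ‖y - z‖ := norm_sub_rev _ _
      linarith
    have := gauss_aux hApos.le hbpos hR z f hint hfb (Metric.ball c ε) measurableSet_ball hSR
    rw [hkey] at this
    exact this
  · -- z inside the ball : pass to the complement
    have hR : 0 ≤ -(‖z - c‖ - ε) := by linarith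
    have hSR : ∀ y ∈ (Metric.ball c ε)ᶜ, -(‖z - c‖ - ε) ≤ ‖y - z‖ := by
      intro y hy
      have h2 : ε ≤ ‖y - c‖ := by
        simpa [dist_eq_norm, Metric.mem_ball, not_lt] using hy
      have h1 : ‖y - c‖ ≤ ‖y - z‖ + ‖z - c‖ := by
        simpa using norm_sub_le_norm_sub_add_norm_sub y z c
      linarith
    have hflip : ∫ y in Metric.ball c ε, f y = -∫ y in (Metric.ball c ε)ᶜ, f y := by
      have := integral_add_compl (measurableSet_ball (x := c) (ε := ε)) hint
      rw [hzero] at this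
      linarith
    have := gauss_aux hApos.le hbpos hR z f hint hfb (Metric.ball c ε)ᶜ measurableSet_ball.compl hSR
    rw [hflip, abs_neg]
    have hsq : (-(‖z - c‖ - ε)) ^ 2 = (‖z - c‖ - ε) ^ 2 := by ring
    rw [hsq] at this
    rw [hkey] at this
    exact this
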